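/- If f₁ and f₂ are typical hesitant fuzzy languages computed by nondeterministic typical hesitant fuzzy automata, then their ℍ-union f₁ ⊎ f₂, defined pointwise by (f₁ ⊎ f₂)(w) = f₁(w) ⊔ f₂(w), is also computed by some nondeterministic typical hesitant fuzzy automaton. -/

import Mathlib

open unitInterval

/-- ℍ: the set of all finite nonempty subsets of [0,1], modeled as
nonempty finsets of the unit interval. -/
abbrev TH := {X : Finset I // X.Nonempty}

/-- inf-combination: X ⊗ Y = {min x y | x ∈ X, y ∈ Y} -/
noncomputable def hinf (X Y : TH) : TH :=
  ⟨Finset.image₂ min X.1 Y.1, X.2.image₂ Y.2⟩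

/-- sup-combination: X ⊔ Y = {max x y | x ∈ X, y ∈ Y} -/
noncomputable def hsup (X Y : TH) : TH :=
  ⟨Finset.image₂ max X.1 Y.1, X.2.image₂ Y.2⟩

/-- the element {1} -/
noncomputable def hone : TH := ⟨{1}, Finset.singleton_nonempty 1⟩

/-- the element {0} -/
noncomputable def hzero : TH := ⟨{0}, Finset.singleton_nonempty 0⟩

/-- the order X ⊑ Y  iff  X ⊔ Y = Y -/
def hle (X Y : TH) : Prop := hsup X Y = Y

instance : Std.Commutative hsup := ⟨fun X Y => Subtype.ext (by
  simpa [hsup] using Finset.image₂_comm (f := max (α := I)) (g := max)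
    (fun a b => max_comm a b))⟩

instance : Std.Associative hsup := ⟨fun X Y Z => Subtype.ext (by
  simp only [hsup]
  exact Finset.image₂_assoc (f := max (α := I)) (g := max) (f' := max) (g' := max)
    (fun a b c => max_assoc a b c))⟩

/-- Iterated sup-combination ⊔_{b ∈ s} f b (it equals {0} on the empty set). -/
noncomputable def bigHsup {β : Type*} (s : Finset β) (f : β → TH) : TH :=
  s.fold hsup hzero f

/-- The extension ψ̂ of the typical hesitant fuzzy transition relation ψ of an
NTHFA to words: ψ̂(q, λ, q') = {1} if q = q' and {0} otherwise, and
ψ̂ on longer words is obtained by sup-combining over intermediate states. -/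
noncomputable def psihat {Q α : Type} [Fintype Q] [DecidableEq Q]
    (ψ : Q → α → Q → TH) : Q → List α → Q → TH
  | q, [], q' => if q = q' then hone else hzero
  | q, a :: w, q' =>
      bigHsup Finset.univ fun q'' => hinf (ψ q a q'') (psihat ψ q'' w q')

/-- The THFL computed by the NTHFA ⟨Q, α, ψ, q₀, F⟩:
f(w) = ⊔_{q ∈ Q} (ψ̂(q₀, w, q) ⊗ F(q)). -/
noncomputable def nthfaLang {Q α : Type} [Fintype Q] [DecidableEq Q]
    (ψ : Q → α → Q → TH) (q0 : Q) (F : Q → TH) (w : List α) : TH :=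
  bigHsup Finset.univ fun q => hinf (psihat ψ q0 w q) (F q)

/-- f ∈ 𝕋_R : f is computed by some nondeterministic typical hesitant fuzzy automaton. -/
def InTR {α : Type} (f : List α → TH) : Prop :=
  ∃ (Q : Type) (_ : Fintype Q) (_ : DecidableEq Q) (_ : Nonempty Q)
    (ψ : Q → α → Q → TH) (q0 : Q) (F : Q → TH),
    ∀ w, f w = nthfaLang ψ q0 F w


/-! ### Auxiliary lattice structure on TH -/

attribute [instance 1] Subtype.instLE Subtype.instLT Subtype.preorder Subtype.partialOrder


noncomputable instance (priority := 10000) : Max TH := ⟨hsup⟩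

lemma hsup_idem' (X : TH) : hsup X X = X := by
  apply Subtype.ext
  ext z
  simp only [hsup, Finset.mem_image₂]
  constructor
  · rintro ⟨a, ha, b, hb, rfl⟩
    rcases max_choice a b with h | h <;> simp [h, ha, hb]
  · intro hz; exact ⟨z, hz, z, hz, max_self z⟩

noncomputable instance (priority := 10000) : SemilatticeSup TH :=
  SemilatticeSup.mk' (fun a b => Std.Commutative.comm (op := hsup) a b)
    (fun a b c => Std.Associative.assoc (op := hsup) a b c) hsup_idem'

lemma hzero_hsup (X : TH) : hsup hzero X = X := by
  apply Subtype.ext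
  simp only [hsup, hzero, Finset.image₂_singleton_left]
  rw [Finset.image_congr (g := id), Finset.image_id]
  intro x _
  exact max_eq_right x.2.1

noncomputable instance (priority := 10000) : OrderBot TH where
  bot := hzero
  bot_le X := by
    change hsup hzero X = X
    exact hzero_hsup X

lemma hzero_eq_bot : hzero = (⊥ : TH) := rfl

lemma hsup_eq_sup (X Y : TH) : hsup X Y = X ⊔ Y := rfl

lemma bigHsup_eq_sup {β : Type*} (s : Finset β) (f : β → TH) :
    bigHsup s f = s.sup f := rfl

lemma hone_hinf (X : TH) : hinf hone X = X := by
  apply Subtype.ext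
  simp only [hinf, hone, Finset.image₂_singleton_left]
  rw [Finset.image_congr (g := id), Finset.image_id]
  intro x _
  exact min_eq_right x.2.2

lemma hzero_hinf (X : TH) : hinf hzero X = hzero := by
  apply Subtype.ext
  simp only [hinf, hzero, Finset.image₂_singleton_left]
  rw [Finset.image_congr (g := fun _ => (0 : I))]
  · exact Finset.image_const X.2 0
  · intro x _
    exact min_eq_left x.2.1

lemma hinf_comm' (X Y : TH) : hinf X Y = hinf Y X := Subtype.ext (by
  simpa [hinf] using Finset.image₂_comm (f := min (α := I)) (g := min)
    (fun a b => min_comm a b))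

lemma hinf_hzero (X : TH) : hinf X hzero = hzero := by
  rw [hinf_comm', hzero_hinf]

lemma hinf_bot (X : TH) : hinf X ⊥ = ⊥ := hinf_hzero X

lemma bot_hinf (X : TH) : hinf ⊥ X = ⊥ := hzero_hinf X

/-! ### sup over `Option` and sum types -/

lemma sup_univ_option {β : Type*} [Fintype β] (g : Option β → TH) :
    Finset.univ.sup g = g none ⊔ Finset.univ.sup (fun b => g (some b)) := by
  apply le_antisymm
  · refine Finset.sup_le fun o _ => ?_
    cases o with
    | none => exact le_sup_left
    | some b =>
        exact le_sup_of_le_right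
          (Finset.le_sup (f := fun b => g (some b)) (Finset.mem_univ b))
  · exact sup_le (Finset.le_sup (Finset.mem_univ none))
      (Finset.sup_le fun b _ => Finset.le_sup (f := g) (Finset.mem_univ (some b)))

lemma sup_univ_sum {β γ : Type*} [Fintype β] [Fintype γ] (g : β ⊕ γ → TH) :
    Finset.univ.sup g =
      Finset.univ.sup (fun b => g (Sum.inl b)) ⊔ Finset.univ.sup (fun c => g (Sum.inr c)) := by
  apply le_antisymm
  · refine Finset.sup_le fun s _ => ?_
    cases s with
    | inl b =>
        exact le_sup_of_le_left
          (Finset.le_sup (f := fun b => g (Sum.inl b)) (Finset.mem_univ b))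
    | inr c =>
        exact le_sup_of_le_right
          (Finset.le_sup (f := fun c => g (Sum.inr c)) (Finset.mem_univ c))
  · exact sup_le
      (Finset.sup_le fun b _ => Finset.le_sup (f := g) (Finset.mem_univ (Sum.inl b)))
      (Finset.sup_le fun c _ => Finset.le_sup (f := g) (Finset.mem_univ (Sum.inr c)))

/-- On the empty word an NTHFA just outputs the final set of its initial state. -/
lemma nthfaLang_nil {Q α : Type} [Fintype Q] [DecidableEq Q]
    (ψ : Q → α → Q → TH) (q0 : Q) (F : Q → TH) :
    nthfaLang ψ q0 F [] = F q0 := by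
  simp only [nthfaLang, bigHsup_eq_sup, psihat]
  apply le_antisymm
  · refine Finset.sup_le fun q _ => ?_
    by_cases h : q0 = q
    · subst h
      rw [if_pos rfl, hone_hinf]
    · rw [if_neg h, hzero_hinf, hzero_eq_bot]
      exact bot_le
  · have key : hinf (if q0 = q0 then hone else hzero) (F q0) = F q0 := by
      rw [if_pos rfl, hone_hinf]
    calc F q0 = hinf (if q0 = q0 then hone else hzero) (F q0) := key.symm
      _ ≤ _ := Finset.le_sup (f := fun q => hinf (if q0 = q then hone else hzero) (F q))
          (Finset.mem_univ q0)

/-- The transition relation of the union automaton. -/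
noncomputable def unionPsi {α Q1 Q2 : Type} (ψ1 : Q1 → α → Q1 → TH)
    (ψ2 : Q2 → α → Q2 → TH) (q01 : Q1) (q02 : Q2) :
    Option (Q1 ⊕ Q2) → α → Option (Q1 ⊕ Q2) → TH
  | none, _, none => hzero
  | none, a, some (Sum.inl p) => ψ1 q01 a p
  | none, a, some (Sum.inr q) => ψ2 q02 a q
  | some (Sum.inl _), _, none => hzero
  | some (Sum.inr _), _, none => hzero
  | some (Sum.inl p), a, some (Sum.inl p') => ψ1 p a p'
  | some (Sum.inl _), _, some (Sum.inr _) => hzero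
  | some (Sum.inr _), _, some (Sum.inl _) => hzero
  | some (Sum.inr q), a, some (Sum.inr q') => ψ2 q a q'

/-- The final map of the union automaton. -/
noncomputable def unionF {Q1 Q2 : Type} (F1 : Q1 → TH) (F2 : Q2 → TH)
    (q01 : Q1) (q02 : Q2) : Option (Q1 ⊕ Q2) → TH
  | none => hsup (F1 q01) (F2 q02)
  | some (Sum.inl p) => F1 p
  | some (Sum.inr q) => F2 q

section UnionAux

variable {α Q1 Q2 : Type} [Fintype Q1] [DecidableEq Q1] [Fintype Q2] [DecidableEq Q2]
  (ψ1 : Q1 → α → Q1 → TH) (ψ2 : Q2 → α → Q2 → TH) (q01 : Q1) (q02 : Q2)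

lemma psihat_unionPsi_inl (w : List α) :
    ∀ (p : Q1) (q' : Option (Q1 ⊕ Q2)),
      psihat (unionPsi ψ1 ψ2 q01 q02) (some (Sum.inl p)) w q' =
        Option.elim q' hzero (Sum.elim (fun p' => psihat ψ1 p w p') (fun _ => hzero)) := by
  induction w with
  | nil =>
      intro p q'
      rcases q' with _ | (p' | q2) <;>
        simp [psihat, Option.elim, Sum.elim]
  | cons a w ih =>
      intro p q'
      simp only [psihat, bigHsup_eq_sup]
      rw [sup_univ_option, sup_univ_sum]
      simp only [ih, unionPsi, hzero_hinf]
      rcases q' with _ | (p' | q2)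
      · simp [Option.elim, hinf_hzero, hzero_hinf, hinf_bot, bot_hinf, hzero_eq_bot, Finset.sup_bot]
      · simp only [Option.elim, Sum.elim, hinf_hzero, hzero_hinf, hinf_bot, bot_hinf, hzero_eq_bot, Finset.sup_bot]
        simp
      · simp only [Option.elim, Sum.elim, hinf_hzero, hzero_hinf, hinf_bot, bot_hinf, hzero_eq_bot, Finset.sup_bot]
        simp

lemma psihat_unionPsi_inr (w : List α) :
    ∀ (q : Q2) (q' : Option (Q1 ⊕ Q2)),
      psihat (unionPsi ψ1 ψ2 q01 q02) (some (Sum.inr q)) w q' =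
        Option.elim q' hzero (Sum.elim (fun _ => hzero) (fun q2' => psihat ψ2 q w q2')) := by
  induction w with
  | nil =>
      intro q q'
      rcases q' with _ | (p' | q2) <;>
        simp [psihat, Option.elim, Sum.elim]
  | cons a w ih =>
      intro q q'
      simp only [psihat, bigHsup_eq_sup]
      rw [sup_univ_option, sup_univ_sum]
      simp only [ih, unionPsi, hzero_hinf]
      rcases q' with _ | (p' | q2)
      · simp [Option.elim, hinf_hzero, hzero_hinf, hinf_bot, bot_hinf, hzero_eq_bot, Finset.sup_bot]
      · simp only [Option.elim, Sum.elim, hinf_hzero, hzero_hinf, hinf_bot, bot_hinf, hzero_eq_bot, Finset.sup_bot]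
        simp
      · simp only [Option.elim, Sum.elim, hinf_hzero, hzero_hinf, hinf_bot, bot_hinf, hzero_eq_bot, Finset.sup_bot]
        simp

lemma psihat_unionPsi_none (a : α) (w : List α) (q' : Option (Q1 ⊕ Q2)) :
    psihat (unionPsi ψ1 ψ2 q01 q02) none (a :: w) q' =
      Option.elim q' hzero (Sum.elim (fun p' => psihat ψ1 q01 (a :: w) p')
        (fun q2' => psihat ψ2 q02 (a :: w) q2')) := by
  conv_lhs => simp only [psihat, bigHsup_eq_sup]
  rw [sup_univ_option, sup_univ_sum]
  simp only [psihat_unionPsi_inl, psihat_unionPsi_inr, unionPsi, hzero_hinf]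
  rcases q' with _ | (p' | q2)
  · simp [Option.elim, hinf_hzero, hzero_hinf, hinf_bot, bot_hinf, hzero_eq_bot, Finset.sup_bot]
  · simp only [Option.elim, Sum.elim, hinf_hzero, hzero_hinf, hinf_bot, bot_hinf, hzero_eq_bot, Finset.sup_bot]
    simp only [psihat, bigHsup_eq_sup]
    simp
  · simp only [Option.elim, Sum.elim, hinf_hzero, hzero_hinf, hinf_bot, bot_hinf, hzero_eq_bot, Finset.sup_bot]
    simp only [psihat, bigHsup_eq_sup]
    simp

lemma nthfaLang_union (F1 : Q1 → TH) (F2 : Q2 → TH) (w : List α) :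
    nthfaLang (unionPsi ψ1 ψ2 q01 q02) none (unionF F1 F2 q01 q02) w =
      hsup (nthfaLang ψ1 q01 F1 w) (nthfaLang ψ2 q02 F2 w) := by
  cases w with
  | nil =>
      rw [nthfaLang_nil, nthfaLang_nil, nthfaLang_nil]
      rfl
  | cons a w =>
      simp only [nthfaLang, bigHsup_eq_sup]
      rw [sup_univ_option, sup_univ_sum]
      simp only [psihat_unionPsi_none, Option.elim, Sum.elim, unionF,
        hzero_hinf, hinf_hzero, bot_hinf, hinf_bot, hzero_eq_bot, hsup_eq_sup]
      simp [bot_hinf, hinf_bot]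

end UnionAux

/-- The ℍ-union of two THFLs computed by NTHFAs is computed by an NTHFA. -/
theorem stmt13 {α : Type} (f1 f2 : List α → TH)
    (h1 : InTR f1) (h2 : InTR f2) :
    InTR (fun w => hsup (f1 w) (f2 w)) := by
  obtain ⟨Q1, iF1, iD1, _, ψ1, q01, F1, h1⟩ := h1
  obtain ⟨Q2, iF2, iD2, _, ψ2, q02, F2, h2⟩ := h2
  refine ⟨Option (Q1 ⊕ Q2), inferInstance, inferInstance, ⟨none⟩,
    unionPsi ψ1 ψ2 q01 q02, none, unionF F1 F2 q01 q02, fun w => ?_⟩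
  show hsup (f1 w) (f2 w) = _
  rw [h1 w, h2 w, nthfaLang_union]
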